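/- Consider the planar ODE ẋ = x(1−x)(3y−2), ẏ = y(1−y)(3x−2) on (0,1)². For every solution (x(t), y(t)) : [0,∞) → (0,1)² whose initial condition satisfies y(0) > (1/2)(1 − x(0) + √(1 + 2x(0) − 3x(0)²)), we have (x(t), y(t)) → (1,1) as t → ∞. -/

import Mathlib

open Filter Topology Set

/-- If `f` has positive derivative at `s` but `f s ≤ f u` for `u` slightly to the left, False. -/
private lemma no_increase_left {f : ℝ → ℝ} {d s : ℝ} (hf : HasDerivAt f d s) (hd : 0 < d)
    (h : ∀ᶠ u in 𝓝[<] s, f s ≤ f u) : False := by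
  have hs := hasDerivAt_iff_tendsto_slope.1 hf
  have h1 : ∀ᶠ u in 𝓝[≠] s, 0 < slope f s u := hs.eventually (eventually_gt_nhds hd)
  have h2 : ∀ᶠ u in 𝓝[<] s, 0 < slope f s u :=
    h1.filter_mono (nhdsWithin_mono s fun u hu => ne_of_lt hu)
  obtain ⟨u, hu1, hu2, hu3⟩ := (h2.and (h.and self_mem_nhdsWithin)).exists
  have hus : u < s := hu3
  rw [slope_def_field] at hu1
  rcases div_pos_iff.1 hu1 with ⟨h5, h6⟩ | ⟨h5, h6⟩
  · linarith
  · linarith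

/-- If `f` has positive derivative at `s` but `f u ≤ f s` slightly to the right, False. -/
private lemma no_increase_right {f : ℝ → ℝ} {d s : ℝ} (hf : HasDerivAt f d s) (hd : 0 < d)
    (h : ∀ᶠ u in 𝓝[>] s, f u ≤ f s) : False := by
  have hs := hasDerivAt_iff_tendsto_slope.1 hf
  have h1 : ∀ᶠ u in 𝓝[≠] s, 0 < slope f s u := hs.eventually (eventually_gt_nhds hd)
  have h2 : ∀ᶠ u in 𝓝[>] s, 0 < slope f s u :=
    h1.filter_mono (nhdsWithin_mono s fun u hu => ne_of_gt hu)
  obtain ⟨u, hu1, hu2, hu3⟩ := (h2.and (h.and self_mem_nhdsWithin)).exists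
  have hus : s < u := hu3
  rw [slope_def_field] at hu1
  rcases div_pos_iff.1 hu1 with ⟨h5, h6⟩ | ⟨h5, h6⟩
  · linarith
  · linarith

private lemma monoOn_Ici (f f' : ℝ → ℝ) (T : ℝ)
    (hf : ∀ t, T ≤ t → HasDerivAt f (f' t) t)
    (h0 : ∀ t, T ≤ t → 0 ≤ f' t) : MonotoneOn f (Ici T) := by
  apply monotoneOn_of_deriv_nonneg (convex_Ici T)
  · exact fun t ht => (hf t ht).continuousAt.continuousWithinAt
  · intro t ht
    rw [interior_Ici] at ht
    exact (hf t ht.le).differentiableAt.differentiableWithinAt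
  · intro t ht
    rw [interior_Ici] at ht
    rw [(hf t ht.le).deriv]
    exact h0 t ht.le

private lemma tendsto_sSup_of_mono (f : ℝ → ℝ) (T B : ℝ)
    (hmono : MonotoneOn f (Ici T))
    (hB : ∀ t, T ≤ t → f t ≤ B) :
    Tendsto f atTop (𝓝 (sSup (f '' Ici T))) := by
  have hne : (f '' Ici T).Nonempty := ⟨f T, mem_image_of_mem f self_mem_Ici⟩
  have hbdd : BddAbove (f '' Ici T) := ⟨B, by rintro _ ⟨t, ht, rfl⟩; exact hB t ht⟩
  rw [tendsto_order]
  constructor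
  · intro a ha
    obtain ⟨_, ⟨t₀, ht₀, rfl⟩, hgt⟩ := exists_lt_of_lt_csSup hne ha
    filter_upwards [eventually_ge_atTop t₀] with t ht
    exact lt_of_lt_of_le hgt (hmono ht₀ (le_trans ht₀ ht) ht)
  · intro a ha
    filter_upwards [eventually_ge_atTop T] with t ht
    exact lt_of_le_of_lt (le_csSup hbdd (mem_image_of_mem f ht)) ha

private lemma prod3_lb {a b c a0 b0 c0 : ℝ} (ha0 : 0 < a0) (hb0 : 0 < b0) (hc0 : 0 < c0)
    (ha : a0 ≤ a) (hb : b0 ≤ b) (hc : c0 ≤ c) : a0 * b0 * c0 ≤ a * b * c := by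
  have h1 : a0 * b0 ≤ a * b := mul_le_mul ha hb hb0.le (ha0.le.trans ha)
  exact mul_le_mul h1 hc hc0.le (mul_nonneg (ha0.le.trans ha) (hb0.le.trans hb))

private lemma no_linear_growth (f f' : ℝ → ℝ) (T c B : ℝ) (hc : 0 < c)
    (hf : ∀ t, T ≤ t → HasDerivAt f (f' t) t)
    (hlb : ∀ t, T ≤ t → c ≤ f' t)
    (hub : ∀ t, T ≤ t → f t ≤ B) : False := by
  have hphi : ∀ t, T ≤ t → HasDerivAt (fun u => f u - c * u) (f' t - c) t := by
    intro t ht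
    exact ((hf t ht).sub ((hasDerivAt_id t).const_mul c)).congr_deriv (by ring)
  have hmono : MonotoneOn (fun u => f u - c * u) (Ici T) :=
    monoOn_Ici _ (fun t => f' t - c) T hphi
      (fun t ht => by have := hlb t ht; linarith)
  have hnn : (0:ℝ) ≤ (B - f T + 1) / c := div_nonneg (by linarith [hub T le_rfl]) hc.le
  have hu : T ≤ T + (B - f T + 1) / c := by linarith
  have h1 := hmono self_mem_Ici hu hu
  simp only at h1
  have h2 : c * ((B - f T + 1) / c) = B - f T + 1 := mul_div_cancel₀ _ hc.ne'
  have h3 := hub _ hu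
  nlinarith

private lemma V_nonpos {a b : ℝ} (ha : 0 < a) (hb : 0 < b) (ha2 : a ≤ 2/3) (hb2 : b ≤ 2/3) :
    a^2 + a*b + b^2 - a - b ≤ 0 := by
  nlinarith [mul_nonneg (by linarith : (0:ℝ) ≤ 2/3 - a) hb.le,
    mul_nonneg (by linarith : (0:ℝ) ≤ 2/3 - b) ha.le,
    mul_nonneg (by linarith : (0:ℝ) ≤ 2/3 - a) ha.le,
    mul_nonneg (by linarith : (0:ℝ) ≤ 2/3 - b) hb.le]


private lemma case_left (x y v : ℝ → ℝ)
    (hmem : ∀ t : ℝ, 0 ≤ t → x t ∈ Ioo (0:ℝ) 1 ∧ y t ∈ Ioo (0:ℝ) 1)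
    (hx : ∀ t : ℝ, 0 ≤ t → HasDerivAt x (x t * (1 - x t) * (3 * y t - 2)) t)
    (hy : ∀ t : ℝ, 0 ≤ t → HasDerivAt y (y t * (1 - y t) * (3 * x t - 2)) t)
    (hvdef : ∀ t : ℝ, v t = (x t)^2 + x t * y t + (y t)^2 - x t - y t)
    (hvpos : ∀ t : ℝ, 0 ≤ t → 0 < v t)
    (hmonV : ∀ T : ℝ, 0 ≤ T →
      (∀ t, T ≤ t → 0 ≤ 4 * x t + 4 * y t - 6 * (x t * y t) - 2) →
      ∀ t, T ≤ t → v T ≤ v t)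
    (hA : ∀ t : ℝ, 0 ≤ t → x t ≤ 2/3) : False := by
  have hx0 : ∀ t, 0 ≤ t → 0 < x t := fun t ht => (hmem t ht).1.1
  have hx1 : ∀ t, 0 ≤ t → x t < 1 := fun t ht => (hmem t ht).1.2
  have hy0 : ∀ t, 0 ≤ t → 0 < y t := fun t ht => (hmem t ht).2.1
  have hy1 : ∀ t, 0 ≤ t → y t < 1 := fun t ht => (hmem t ht).2.2
  have hygt : ∀ t, 0 ≤ t → 2/3 < y t := by
    intro t ht
    by_contra hle
    push_neg at hle
    have h1 := V_nonpos (hx0 t ht) (hy0 t ht) (hA t ht) hle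
    have h2 := hvpos t ht
    rw [hvdef t] at h2
    linarith
  have hxlt : ∀ t, 0 ≤ t → x t < 2/3 := by
    intro s hs
    rcases lt_or_eq_of_le (hA s hs) with h | h
    · exact h
    exfalso
    have hds : 0 < x s * (1 - x s) * (3 * y s - 2) :=
      mul_pos (mul_pos (hx0 s hs) (by linarith [hx1 s hs])) (by linarith [hygt s hs])
    apply no_increase_right (hx s hs) hds
    filter_upwards [self_mem_nhdsWithin] with u hu
    have h2 : x u ≤ 2/3 := hA u (hs.trans (le_of_lt hu))
    rw [← h] at h2; exact h2
  -- monotonicity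
  have hxmono : MonotoneOn x (Ici 0) :=
    monoOn_Ici x _ 0 hx (fun t ht => le_of_lt (mul_pos (mul_pos (hx0 t ht)
      (by linarith [hx1 t ht])) (by linarith [hygt t ht])))
  have hymono : MonotoneOn (fun t => -(y t)) (Ici 0) := by
    apply monoOn_Ici _ (fun t => -(y t * (1 - y t) * (3 * x t - 2))) 0
      (fun t ht => (hy t ht).neg)
    intro t ht
    have h1 : 0 ≤ y t * (1 - y t) * (2 - 3 * x t) :=
      le_of_lt (mul_pos (mul_pos (hy0 t ht) (by linarith [hy1 t ht])) (by linarith [hxlt t ht]))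
    have h2 : y t * (1 - y t) * (2 - 3 * x t) = -(y t * (1 - y t) * (3 * x t - 2)) := by ring
    linarith [h2 ▸ h1]
  -- limits
  set L := sSup (x '' Ici 0) with hLdef
  have hxL : Tendsto x atTop (𝓝 L) := tendsto_sSup_of_mono x 0 (2/3) hxmono hA
  have hxbdd : BddAbove (x '' Ici 0) := ⟨2/3, by rintro _ ⟨t, ht, rfl⟩; exact hA t ht⟩
  have hL23 : L ≤ 2/3 := csSup_le ⟨x 0, mem_image_of_mem x self_mem_Ici⟩
    (by rintro _ ⟨t, ht, rfl⟩; exact hA t ht)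
  have hxleL : ∀ t, 0 ≤ t → x t ≤ L := fun t ht => le_csSup hxbdd (mem_image_of_mem x ht)
  set M' := sSup ((fun t => -(y t)) '' Ici 0) with hM'def
  have hyM' : Tendsto (fun t => -(y t)) atTop (𝓝 M') :=
    tendsto_sSup_of_mono _ 0 (-(2/3)) hymono (fun t ht => by linarith [hygt t ht])
  have hyM : Tendsto y atTop (𝓝 (-M')) := by
    have h := hyM'.neg; simpa using h
  have hybdd : BddAbove ((fun t => -(y t)) '' Ici 0) :=
    ⟨-(2/3), by rintro _ ⟨t, ht, rfl⟩; simp only; linarith [hygt t ht]⟩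
  have hygeM : ∀ t, 0 ≤ t → -M' ≤ y t := fun t ht => by
    have h := le_csSup hybdd (mem_image_of_mem _ ht); linarith
  have hM23 : 2/3 ≤ -M' := ge_of_tendsto hyM
    (by filter_upwards [eventually_ge_atTop 0] with t ht; exact (hygt t ht).le)
  have hyleY0 : ∀ t, 0 ≤ t → y t ≤ y 0 := fun t ht => by
    have h := hymono self_mem_Ici (mem_Ici.2 ht) ht; simp only at h; linarith
  have hxgeX0 : ∀ t, 0 ≤ t → x 0 ≤ x t := fun t ht => hxmono self_mem_Ici (mem_Ici.2 ht) ht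
  -- M = 2/3
  have hMeq : -M' = 2/3 := by
    by_contra hne
    have hM' : 2/3 < -M' := lt_of_le_of_ne hM23 (Ne.symm hne)
    have hc : 0 < x 0 * (1/3) * (3 * (-M') - 2) :=
      mul_pos (mul_pos (hx0 0 le_rfl) (by norm_num)) (by linarith)
    exact no_linear_growth x (fun t => x t * (1 - x t) * (3 * y t - 2)) 0 _ (2/3) hc hx
      (fun t ht => prod3_lb (hx0 0 le_rfl) (by norm_num) (by linarith)
        (hxgeX0 t ht) (show (1:ℝ)/3 ≤ 1 - x t by linarith [hA t ht])
        (show 3 * (-M') - 2 ≤ 3 * y t - 2 by linarith [hygeM t ht]))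
      hA
  -- L = 2/3
  have hLeq : L = 2/3 := by
    by_contra hne
    have hL' : L < 2/3 := lt_of_le_of_ne hL23 hne
    have hc : 0 < (2/3) * (1 - y 0) * (2 - 3 * L) :=
      mul_pos (mul_pos (by norm_num) (by linarith [hy1 0 le_rfl])) (by linarith)
    apply no_linear_growth (fun t => -(y t)) (fun t => -(y t * (1 - y t) * (3 * x t - 2)))
      0 _ (-(2/3)) hc (fun t ht => (hy t ht).neg) ?_
      (fun t ht => by show -(y t) ≤ -(2/3); linarith [hygt t ht])
    intro t ht
    have h1 := prod3_lb (show (0:ℝ) < 2/3 by norm_num)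
      (show 0 < 1 - y 0 by linarith [hy1 0 le_rfl]) (show 0 < 2 - 3*L by linarith)
      (le_of_lt (hygt t ht)) (show 1 - y 0 ≤ 1 - y t by linarith [hyleY0 t ht])
      (show 2 - 3 * L ≤ 2 - 3 * x t by linarith [hxleL t ht])
    have heq : y t * (1 - y t) * (2 - 3 * x t) = -(y t * (1 - y t) * (3 * x t - 2)) := by ring
    show 2 / 3 * (1 - y 0) * (2 - 3 * L) ≤ -(y t * (1 - y t) * (3 * x t - 2))
    linarith [heq ▸ h1]
  -- both tend to 2/3, so v → 0, but v is eventually nondecreasing and positive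
  have hyM23 : Tendsto y atTop (𝓝 (2/3)) := hMeq ▸ hyM
  have hxL23 : Tendsto x atTop (𝓝 (2/3)) := hLeq ▸ hxL
  have hq : Tendsto (fun t => 4 * x t + 4 * y t - 6 * (x t * y t) - 2) atTop (𝓝 (2/3)) := by
    have h : Tendsto (fun t => 4 * x t + 4 * y t - 6 * (x t * y t) - 2) atTop
        (𝓝 (4 * (2/3) + 4 * (2/3) - 6 * ((2/3) * (2/3)) - 2)) :=
      (((hxL23.const_mul 4).add (hyM23.const_mul 4)).sub ((hxL23.mul hyM23).const_mul 6)).sub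
        tendsto_const_nhds
    have h0 : (4 * (2/3:ℝ) + 4 * (2/3) - 6 * ((2/3) * (2/3)) - 2) = 2/3 := by norm_num
    rw [h0] at h; exact h
  have hvlim : Tendsto v atTop (𝓝 0) := by
    have h : Tendsto (fun t => (x t)^2 + x t * y t + (y t)^2 - x t - y t) atTop
        (𝓝 ((2/3:ℝ)^2 + (2/3) * (2/3) + (2/3)^2 - 2/3 - 2/3)) :=
      ((((hxL23.pow 2).add (hxL23.mul hyM23)).add (hyM23.pow 2)).sub hxL23).sub hyM23
    have h0 : ((2/3:ℝ)^2 + (2/3) * (2/3) + (2/3)^2 - 2/3 - 2/3) = 0 := by norm_num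
    rw [h0] at h
    exact h.congr (fun t => (hvdef t).symm)
  obtain ⟨T0, hT0⟩ := eventually_atTop.1
    (hq.eventually (eventually_ge_nhds (by norm_num : (0:ℝ) < 2/3)))
  have key := hmonV (max T0 0) (le_max_right _ _) (fun t ht => hT0 t ((le_max_left _ _).trans ht))
  have hvT2 : 0 < v (max T0 0) := hvpos _ (le_max_right _ _)
  have hfin : v (max T0 0) ≤ 0 := ge_of_tendsto hvlim
    (by filter_upwards [eventually_ge_atTop (max T0 0)] with t ht; exact key t ht)
  linarith


/-- **Stag Hunt, region of attraction of (Stag,Stag).**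
For the projected replicator dynamics of the Stag Hunt game,
`ẋ = x(1-x)(3y-2)`, `ẏ = y(1-y)(3x-2)` on `(0,1)²`, every solution whose initial
condition lies strictly above the curve
`y = (1/2)(1 - x + √(1 + 2x - 3x²))` converges to `(1,1)` (i.e. to (Stag,Stag)). -/
theorem stagHunt_above_curve_tendsto_stag
    (x y : ℝ → ℝ)
    (hmem : ∀ t : ℝ, 0 ≤ t → x t ∈ Ioo (0:ℝ) 1 ∧ y t ∈ Ioo (0:ℝ) 1)
    (hx : ∀ t : ℝ, 0 ≤ t →
      HasDerivAt x (x t * (1 - x t) * (3 * y t - 2)) t)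
    (hy : ∀ t : ℝ, 0 ≤ t →
      HasDerivAt y (y t * (1 - y t) * (3 * x t - 2)) t)
    (h0 : y 0 > (1/2) * (1 - x 0 + Real.sqrt (1 + 2 * x 0 - 3 * (x 0)^2))) :
    Tendsto (fun t => (x t, y t)) atTop (𝓝 ((1:ℝ), (1:ℝ))) := by
  have hx0 : ∀ t, 0 ≤ t → 0 < x t := fun t ht => (hmem t ht).1.1
  have hx1 : ∀ t, 0 ≤ t → x t < 1 := fun t ht => (hmem t ht).1.2
  have hy0 : ∀ t, 0 ≤ t → 0 < y t := fun t ht => (hmem t ht).2.1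
  have hy1 : ∀ t, 0 ≤ t → y t < 1 := fun t ht => (hmem t ht).2.2
  have hcx : ∀ t : ℝ, 0 ≤ t → ContinuousAt x t := fun t ht => (hx t ht).continuousAt
  have hcy : ∀ t : ℝ, 0 ≤ t → ContinuousAt y t := fun t ht => (hy t ht).continuousAt
  set v : ℝ → ℝ := fun t => (x t)^2 + x t * y t + (y t)^2 - x t - y t with hvdef
  have hvdef' : ∀ t : ℝ, v t = (x t)^2 + x t * y t + (y t)^2 - x t - y t := fun t => rfl
  set qe : ℝ → ℝ := fun t =>
    4 * x (max t 0) + 4 * y (max t 0) - 6 * (x (max t 0) * y (max t 0)) - 2 with hqedef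
  have hmax : Continuous fun t : ℝ => max t 0 := continuous_id.max continuous_const
  have hxm : Continuous fun t => x (max t 0) := continuous_iff_continuousAt.2 fun t =>
    ContinuousAt.comp (g := x) (f := fun s => max s 0)
      (hcx (max t 0) (le_max_right _ _)) hmax.continuousAt
  have hym : Continuous fun t => y (max t 0) := continuous_iff_continuousAt.2 fun t =>
    ContinuousAt.comp (g := y) (f := fun s => max s 0)
      (hcy (max t 0) (le_max_right _ _)) hmax.continuousAt
  have hqec : Continuous qe := by
    rw [hqedef]
    exact (((continuous_const.mul hxm).add (continuous_const.mul hym)).sub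
      (continuous_const.mul (hxm.mul hym))).sub continuous_const
  set g : ℝ → ℝ := fun t => ∫ s in (0:ℝ)..t, qe s with hgdef
  have hg : ∀ t : ℝ, HasDerivAt g (qe t) t := fun t =>
    (hqec.integral_hasStrictDerivAt 0 t).hasDerivAt
  have hqe_eq : ∀ t, 0 ≤ t → qe t = 4 * x t + 4 * y t - 6 * (x t * y t) - 2 := by
    intro t ht
    rw [hqedef]
    simp only [max_eq_left ht]
  have hvD : ∀ t, 0 ≤ t → HasDerivAt v (qe t * v t) t := by
    intro t ht
    have Hx := hx t ht
    have Hy := hy t ht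
    have H := ((((Hx.pow 2).add (Hx.mul Hy)).add (Hy.pow 2)).sub Hx).sub Hy
    refine H.congr_deriv ?_
    rw [hqe_eq t ht, hvdef']
    push_cast
    ring
  have hveq : ∀ t, 0 ≤ t → v t = v 0 * Real.exp (g t) := by
    intro t ht
    have hh : ∀ u, 0 ≤ u → HasDerivAt (fun w => v w * Real.exp (-(g w))) 0 u := by
      intro u hu
      have h1 := (hvD u hu).mul ((hg u).neg.exp)
      refine h1.congr_deriv ?_
      ring
    have hcont : ContinuousOn (fun w => v w * Real.exp (-(g w))) (Icc 0 t) :=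
      fun u hu => ((hh u hu.1).continuousAt).continuousWithinAt
    have hconst := constant_of_has_deriv_right_zero hcont
      (fun u hu => (hh u hu.1).hasDerivWithinAt) t (right_mem_Icc.2 ht)
    have hg0 : g 0 = 0 := by rw [hgdef]; exact intervalIntegral.integral_same
    simp only [hg0, neg_zero, Real.exp_zero, mul_one] at hconst
    rw [Real.exp_neg] at hconst
    have hexp : Real.exp (g t) ≠ 0 := Real.exp_ne_zero _
    field_simp at hconst
    linarith [hconst]
  have hv0 : 0 < v 0 := by
    have hx00 := hx0 0 le_rfl
    have hx01 := hx1 0 le_rfl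
    have hy00 := hy0 0 le_rfl
    have hD : 0 ≤ 1 + 2 * x 0 - 3 * (x 0)^2 := by nlinarith
    have hs := Real.sq_sqrt hD
    have hsn := Real.sqrt_nonneg (1 + 2 * x 0 - 3 * (x 0)^2)
    have h1 : Real.sqrt (1 + 2 * x 0 - 3 * (x 0)^2) < 2 * y 0 - 1 + x 0 := by linarith
    have h2 : 1 + 2 * x 0 - 3 * (x 0)^2 < (2 * y 0 - 1 + x 0)^2 := by nlinarith
    rw [hvdef']
    nlinarith
  have hvpos : ∀ t, 0 ≤ t → 0 < v t := fun t ht => by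
    rw [hveq t ht]; exact mul_pos hv0 (Real.exp_pos _)
  have hmonV : ∀ T, 0 ≤ T → (∀ t, T ≤ t → 0 ≤ 4 * x t + 4 * y t - 6 * (x t * y t) - 2) →
      ∀ t, T ≤ t → v T ≤ v t := by
    intro T hT hq t ht
    have hgm : MonotoneOn g (Ici T) := monoOn_Ici g qe T (fun u _ => hg u)
      (fun u hu => by rw [hqe_eq u (hT.trans hu)]; exact hq u hu)
    have hgle := hgm self_mem_Ici (mem_Ici.2 ht) ht
    rw [hveq T hT, hveq t (hT.trans ht)]
    exact mul_le_mul_of_nonneg_left (Real.exp_le_exp.2 hgle) hv0.le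
  -- there is a time where both coordinates exceed 2/3
  have hTex : ∃ T, 0 ≤ T ∧ 2/3 < x T ∧ 2/3 < y T := by
    by_contra hnot
    push_neg at hnot
    by_cases hA : ∀ t, 0 ≤ t → x t ≤ 2/3
    · exact absurd (case_left x y v hmem hx hy hvdef' hvpos hmonV hA) id
    by_cases hB : ∀ t, 0 ≤ t → y t ≤ 2/3
    · refine absurd (case_left y x v (fun t ht => ⟨(hmem t ht).2, (hmem t ht).1⟩) hy hx
        (fun t => by rw [hvdef']; ring)
        hvpos
        (fun T hT hq => hmonV T hT (fun t ht => by
          have h1 := hq t ht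
          have h2 : x t * y t = y t * x t := mul_comm _ _
          linarith)) hB) id
    push_neg at hA hB
    obtain ⟨t₁, ht₁, hx₁⟩ := hA
    obtain ⟨t₂, ht₂, hy₂⟩ := hB
    have hy₁ : y t₁ ≤ 2/3 := hnot t₁ ht₁ hx₁
    have hx₂ : x t₂ ≤ 2/3 := by
      by_contra hcc; push_neg at hcc
      exact absurd (hnot t₂ ht₂ hcc) (not_le.2 hy₂)
    have hsub : uIcc t₁ t₂ ⊆ Ici 0 := fun u hu => le_trans (le_min ht₁ ht₂) hu.1
    have hcont : ContinuousOn (fun t => x t - y t) (uIcc t₁ t₂) := fun u hu =>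
      ((hcx u (hsub hu)).sub (hcy u (hsub hu))).continuousWithinAt
    have h0mem : (0:ℝ) ∈ uIcc (x t₁ - y t₁) (x t₂ - y t₂) := by
      rw [mem_uIcc]
      right
      constructor <;> linarith
    obtain ⟨s, hs_mem, hfs⟩ := intermediate_value_uIcc hcont h0mem
    have hs0 : 0 ≤ s := hsub hs_mem
    have hxy : x s = y s := by
      have : x s - y s = 0 := hfs
      linarith
    have hxs : 2/3 < x s := by
      by_contra hle; push_neg at hle
      have h1 := V_nonpos (hx0 s hs0) (hy0 s hs0) hle (hxy ▸ hle)
      have h2 := hvpos s hs0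
      rw [hvdef'] at h2
      linarith
    have := hnot s hs0 hxs
    rw [← hxy] at this
    linarith
  obtain ⟨T, hT0, hxT, hyT⟩ := hTex
  have hmemT : ∀ t, T ≤ t → (0:ℝ) ≤ t := fun t ht => hT0.trans ht
  -- forward invariance of { x > 2/3, y > 2/3 } on [T, ∞)
  have hinv : ∀ t, T ≤ t → 2/3 < x t ∧ 2/3 < y t := by
    by_contra hnot
    push_neg at hnot
    obtain ⟨t0, ht0, hcond⟩ := hnot
    set S : Set ℝ := {u | T ≤ u ∧ min (x u) (y u) ≤ 2/3} with hSdef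
    have ht0S : t0 ∈ S := by
      refine ⟨ht0, ?_⟩
      rcases le_or_gt (x t0) (2/3) with h | h
      · exact min_le_of_left_le h
      · exact min_le_of_right_le (hcond h)
    have hSc : IsClosed S := by
      have hminc : ContinuousOn (fun u => min (x u) (y u)) (Ici T) := by
        intro u hu
        have hca : ContinuousAt (fun u => min (x u) (y u)) u :=
          Tendsto.min (hcx u (hT0.trans hu)) (hcy u (hT0.trans hu))
        exact hca.continuousWithinAt
      have hSeq : S = Ici T ∩ (fun u => min (x u) (y u)) ⁻¹' Iic (2/3) := rfl
      rw [hSeq]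
      exact hminc.preimage_isClosed_of_isClosed isClosed_Ici isClosed_Iic
    have hSne : S.Nonempty := ⟨t0, ht0S⟩
    have hSbdd : BddBelow S := ⟨T, fun u hu => hu.1⟩
    set s := sInf S with hsdef
    have hsS : s ∈ S := hSc.csInf_mem hSne hSbdd
    have hles : T ≤ s := le_csInf hSne (fun u hu => hu.1)
    have hTs : T < s := by
      rcases lt_or_eq_of_le hles with h | h
      · exact h
      · exfalso
        rw [← h] at hsS
        have h1 : 2/3 < min (x T) (y T) := lt_min hxT hyT
        have h2 := hsS.2
        linarith
    have hs0 : (0:ℝ) ≤ s := hT0.trans hTs.le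
    have hbefore : ∀ u, u ∈ Ioo T s → 2/3 < x u ∧ 2/3 < y u := by
      intro u hu
      by_contra hc
      push_neg at hc
      have huS : u ∈ S := by
        refine ⟨hu.1.le, ?_⟩
        rcases le_or_gt (x u) (2/3) with h | h
        · exact min_le_of_left_le h
        · exact min_le_of_right_le (hc h)
      have hsle : s ≤ u := csInf_le hSbdd huS
      exact absurd hsle (not_le.2 hu.2)
    have hIoo : Ioo T s ∈ 𝓝[<] s := Ioo_mem_nhdsLT_of_mem ⟨hTs, le_rfl⟩
    have hxge : 2/3 ≤ x s := by
      have hcw : ContinuousWithinAt x (Iio s) s := (hcx s hs0).continuousWithinAt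
      exact ge_of_tendsto hcw (by filter_upwards [hIoo] with u hu; exact (hbefore u hu).1.le)
    have hyge : 2/3 ≤ y s := by
      have hcw : ContinuousWithinAt y (Iio s) s := (hcy s hs0).continuousWithinAt
      exact ge_of_tendsto hcw (by filter_upwards [hIoo] with u hu; exact (hbefore u hu).2.le)
    rcases min_le_iff.1 hsS.2 with hxs | hys
    · have hxeq : x s = 2/3 := le_antisymm hxs hxge
      have hysgt : 2/3 < y s := by
        rcases lt_or_eq_of_le hyge with h | h
        · exact h
        · exfalso
          have h2 := hvpos s hs0
          rw [hvdef', hxeq, ← h] at h2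
          norm_num at h2
      have hd : 0 < x s * (1 - x s) * (3 * y s - 2) := by
        rw [hxeq]; nlinarith
      apply no_increase_left (hx s hs0) hd
      filter_upwards [hIoo] with u hu
      rw [hxeq]
      exact (hbefore u hu).1.le
    · have hyeq : y s = 2/3 := le_antisymm hys hyge
      have hxsgt : 2/3 < x s := by
        rcases lt_or_eq_of_le hxge with h | h
        · exact h
        · exfalso
          have h2 := hvpos s hs0
          rw [hvdef', hyeq, ← h] at h2
          norm_num at h2
      have hd : 0 < y s * (1 - y s) * (3 * x s - 2) := by
        rw [hyeq]; nlinarith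
      apply no_increase_left (hy s hs0) hd
      filter_upwards [hIoo] with u hu
      rw [hyeq]
      exact (hbefore u hu).2.le
  -- monotone convergence to (1,1)
  have hxmono : MonotoneOn x (Ici T) := monoOn_Ici x _ T (fun t ht => hx t (hmemT t ht))
    (fun t ht => le_of_lt (mul_pos (mul_pos (hx0 t (hmemT t ht))
      (by linarith [hx1 t (hmemT t ht)])) (by linarith [(hinv t ht).2])))
  have hymono : MonotoneOn y (Ici T) := monoOn_Ici y _ T (fun t ht => hy t (hmemT t ht))
    (fun t ht => le_of_lt (mul_pos (mul_pos (hy0 t (hmemT t ht))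
      (by linarith [hy1 t (hmemT t ht)])) (by linarith [(hinv t ht).1])))
  set L := sSup (x '' Ici T) with hLdef
  set M := sSup (y '' Ici T) with hMdef
  have hxL : Tendsto x atTop (𝓝 L) :=
    tendsto_sSup_of_mono x T 1 hxmono (fun t ht => (hx1 t (hmemT t ht)).le)
  have hyM : Tendsto y atTop (𝓝 M) :=
    tendsto_sSup_of_mono y T 1 hymono (fun t ht => (hy1 t (hmemT t ht)).le)
  have hxbdd : BddAbove (x '' Ici T) := ⟨1, by rintro _ ⟨t, ht, rfl⟩; exact (hx1 t (hmemT t ht)).le⟩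
  have hybdd : BddAbove (y '' Ici T) := ⟨1, by rintro _ ⟨t, ht, rfl⟩; exact (hy1 t (hmemT t ht)).le⟩
  have hL1 : L ≤ 1 := csSup_le ⟨x T, mem_image_of_mem x self_mem_Ici⟩
    (by rintro _ ⟨t, ht, rfl⟩; exact (hx1 t (hmemT t ht)).le)
  have hM1 : M ≤ 1 := csSup_le ⟨y T, mem_image_of_mem y self_mem_Ici⟩
    (by rintro _ ⟨t, ht, rfl⟩; exact (hy1 t (hmemT t ht)).le)
  have hxleL : ∀ t, T ≤ t → x t ≤ L := fun t ht => le_csSup hxbdd (mem_image_of_mem x ht)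
  have hyleM : ∀ t, T ≤ t → y t ≤ M := fun t ht => le_csSup hybdd (mem_image_of_mem y ht)
  have hLeq : L = 1 := by
    by_contra hne
    have hL' : L < 1 := lt_of_le_of_ne hL1 hne
    have hc : 0 < (2/3) * (1 - L) * (3 * y T - 2) :=
      mul_pos (mul_pos (by norm_num) (by linarith)) (by linarith)
    exact no_linear_growth x _ T _ 1 hc (fun t ht => hx t (hmemT t ht))
      (fun t ht => prod3_lb (by norm_num) (by linarith) (by linarith)
        (hinv t ht).1.le (show 1 - L ≤ 1 - x t by linarith [hxleL t ht])
        (show 3 * y T - 2 ≤ 3 * y t - 2 by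
          linarith [hymono self_mem_Ici (mem_Ici.2 ht) ht]))
      (fun t ht => (hx1 t (hmemT t ht)).le)
  have hMeq : M = 1 := by
    by_contra hne
    have hM' : M < 1 := lt_of_le_of_ne hM1 hne
    have hc : 0 < (2/3) * (1 - M) * (3 * x T - 2) :=
      mul_pos (mul_pos (by norm_num) (by linarith)) (by linarith)
    exact no_linear_growth y _ T _ 1 hc (fun t ht => hy t (hmemT t ht))
      (fun t ht => prod3_lb (by norm_num) (by linarith) (by linarith)
        (hinv t ht).2.le (show 1 - M ≤ 1 - y t by linarith [hyleM t ht])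
        (show 3 * x T - 2 ≤ 3 * x t - 2 by
          linarith [hxmono self_mem_Ici (mem_Ici.2 ht) ht]))
      (fun t ht => (hy1 t (hmemT t ht)).le)
  exact (hLeq ▸ hxL).prodMk_nhds (hMeq ▸ hyM)
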